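/- In the n-door Monty Hall game where the host opens n−2 doors, the conditional winning probabilities satisfy P(W|C)=P(E^c) and P(W|C^c)=P(E). -/
import Mathlib


open MeasureTheory ProbabilityTheory ENNReal

theorem monty_hall_cond_eq_E
    {Ω : Type*} [MeasurableSpace Ω] (μ : Measure Ω) [IsProbabilityMeasure μ]
    (E C W : Set Ω) (hE : MeasurableSet E) (hC : MeasurableSet C) (hW : MeasurableSet W)
    (n : ℕ) (hn : 3 ≤ n)
    (p : ℝ≥0∞) (hp0 : 0 < p) (hp1 : p < 1)
    (hPE : μ E = 1/(n : ℝ≥0∞))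
    (hCE : μ[|E] C = p) (hCEc : μ[|Eᶜ] C = p)
    (h1 : μ[|E ∩ C] W = 0) (h2 : μ[|E ∩ Cᶜ] W = 1)
    (h3 : μ[|Eᶜ ∩ C] W = 1) (h4 : μ[|Eᶜ ∩ Cᶜ] W = 0) :
    μ[|C] W = μ Eᶜ ∧ μ[|Cᶜ] W = μ E := by
  have hn0 : (n : ℝ≥0∞) ≠ 0 := Nat.cast_ne_zero.mpr (by omega)
  have hnt : (n : ℝ≥0∞) ≠ ⊤ := natCast_ne_top n
  set a : ℝ≥0∞ := 1/(n : ℝ≥0∞) with ha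
  have ha0 : a ≠ 0 := by simp [ha, hnt]
  have hat : a ≠ ⊤ := by simp [ha, hn0]
  have ha1 : a ≤ 1 := by
    rw [ha, one_div]
    exact ENNReal.inv_le_one.mpr (Nat.one_le_cast.mpr (by omega))
  have hpt : p ≠ ⊤ := (hp1.trans one_lt_top).ne
  have hEc : μ Eᶜ = 1 - a := by rw [prob_compl_eq_one_sub hE, hPE]
  -- intersection measures
  have hEC : μ (E ∩ C) = p * a := by
    have := cond_mul_eq_inter hE C μ
    rw [hCE, hPE] at this; exact this.symm
  have hEcC : μ (Eᶜ ∩ C) = p * (1 - a) := by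
    have := cond_mul_eq_inter hE.compl C μ
    rw [hCEc, hEc] at this; exact this.symm
  have hsplit : ∀ s : Set Ω, μ s = μ (E ∩ s) + μ (Eᶜ ∩ s) := by
    intro s
    have := measure_inter_add_diff (μ := μ) s hE
    rw [Set.diff_eq, Set.inter_comm s E, Set.inter_comm s Eᶜ] at this
    exact this.symm
  have hCp : μ C = p := by
    rw [hsplit C, hEC, hEcC, ← mul_add, add_tsub_cancel_of_le ha1, mul_one]
  have hpa : p * a ≠ ⊤ := ENNReal.mul_ne_top hpt hat
  have hpa' : p * (1 - a) ≠ ⊤ :=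
    ENNReal.mul_ne_top hpt (tsub_le_self.trans_lt one_lt_top).ne
  have hECc : μ (E ∩ Cᶜ) = (1 - p) * a := by
    have h := measure_inter_add_diff (μ := μ) E hC
    rw [Set.diff_eq, hEC, hPE] at h
    have h2' : p * a + (1 - p) * a = a := by
      rw [← add_mul, add_tsub_cancel_of_le hp1.le, one_mul]
    exact (ENNReal.add_right_inj hpa).mp (h.trans h2'.symm)
  have hEcCc : μ (Eᶜ ∩ Cᶜ) = (1 - p) * (1 - a) := by
    have h := measure_inter_add_diff (μ := μ) Eᶜ hC
    rw [Set.diff_eq, hEcC, hEc] at h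
    have h2' : p * (1 - a) + (1 - p) * (1 - a) = 1 - a := by
      rw [← add_mul, add_tsub_cancel_of_le hp1.le, one_mul]
    exact (ENNReal.add_right_inj hpa').mp (h.trans h2'.symm)
  -- W intersections
  have hECW : μ (E ∩ C ∩ W) = 0 := by
    have := cond_mul_eq_inter (hE.inter hC) W μ
    rw [h1, zero_mul] at this; exact this.symm
  have hEcCW : μ (Eᶜ ∩ C ∩ W) = p * (1 - a) := by
    have := cond_mul_eq_inter (hE.compl.inter hC) W μ
    rw [h3, one_mul, hEcC] at this; exact this.symm
  have hECcW : μ (E ∩ Cᶜ ∩ W) = (1 - p) * a := by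
    have := cond_mul_eq_inter (hE.inter hC.compl) W μ
    rw [h2, one_mul, hECc] at this; exact this.symm
  have hEcCcW : μ (Eᶜ ∩ Cᶜ ∩ W) = 0 := by
    have := cond_mul_eq_inter (hE.compl.inter hC.compl) W μ
    rw [h4, zero_mul] at this; exact this.symm
  have hCW : μ (C ∩ W) = p * (1 - a) := by
    rw [hsplit (C ∩ W), ← Set.inter_assoc, ← Set.inter_assoc, hECW, hEcCW, zero_add]
  have hCcW : μ (Cᶜ ∩ W) = (1 - p) * a := by
    rw [hsplit (Cᶜ ∩ W), ← Set.inter_assoc, ← Set.inter_assoc, hECcW, hEcCcW, add_zero]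
  have hCc : μ Cᶜ = 1 - p := by rw [prob_compl_eq_one_sub hC, hCp]
  constructor
  · rw [cond_apply hC, hCW, hCp, ← mul_assoc, ENNReal.inv_mul_cancel hp0.ne' hpt, one_mul, hEc]
  · have h1p0 : (1 : ℝ≥0∞) - p ≠ 0 := (tsub_pos_of_lt hp1).ne'
    have h1pt : (1 : ℝ≥0∞) - p ≠ ⊤ := (tsub_le_self.trans_lt one_lt_top).ne
    rw [cond_apply hC.compl, hCcW, hCc, ← mul_assoc, ENNReal.inv_mul_cancel h1p0 h1pt,
      one_mul, hPE]
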